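/- arXiv:2312.05973 — 2 statements merged into one kernel-verified Lean document; each statement's English description precedes it below -/
import Mathlib

section
/- For every f ∈ L, the risk measure ρ admits the kernel representation ρ(f) = sup_{κ ∈ ker(X,Y)} ∫_X ( ∫_Y f(y) κ(x,dy) − C(x,κ(x)) ) μ(dx), where the integrand is evaluated with the convention ∞ − ∞ = −∞. -/
open MeasureTheory ProbabilityTheory
open scoped ENNReal

noncomputable section

/-- The positive part of an extended real number, as an element of `ℝ≥0∞`. -/
def EReal.posPart (x : EReal) : ℝ≥0∞ := (max x 0).abs

/-- The signed integral of an `EReal`-valued function, with the convention `∞ - ∞ = -∞`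
(note that in `EReal` one has `⊤ - ⊤ = ⊥`). -/
def sint {α : Type*} [MeasurableSpace α] (μ : Measure α) (f : α → EReal) : EReal :=
  ((∫⁻ a, (f a).posPart ∂μ : ℝ≥0∞) : EReal) - ((∫⁻ a, (-(f a)).posPart ∂μ : ℝ≥0∞) : EReal)

/-- The weak optimal transport cost `inf_{κ ∈ ker(μ,ν)} ∫ C(x, κ(x)) μ(dx)`,
with the convention `inf ∅ = ∞`. -/
def wotCost {X Y : Type*} [MeasurableSpace X] [MeasurableSpace Y]
    (μ : Measure X) (C : X → Measure Y → ℝ≥0∞) (ν : Measure Y) : ℝ≥0∞ :=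
  ⨅ (κ : Kernel X Y) (_ : IsMarkovKernel κ) (_ : μ.bind κ = ν), ∫⁻ x, C x (κ x) ∂μ

/-- The risk measure with weak optimal transport penalty. -/
def rho {X Y : Type*} [MeasurableSpace X] [MeasurableSpace Y]
    (μ : Measure X) (C : X → Measure Y → ℝ≥0∞) (f : Y → EReal) : EReal :=
  ⨆ (ν : Measure Y) (_ : IsProbabilityMeasure ν), (sint ν f - (wotCost μ C ν : EReal))

/-- The `C`-transform `f^C(x) = sup_{ϑ ∈ P(Y)} ( ∫ f dϑ − C(x,ϑ) )`. -/
def Ctrans {X Y : Type*} [MeasurableSpace X] [MeasurableSpace Y]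
    (C : X → Measure Y → ℝ≥0∞) (f : Y → EReal) (x : X) : EReal :=
  ⨆ (ϑ : Measure Y) (_ : IsProbabilityMeasure ϑ), (sint ϑ f - (C x ϑ : EReal))

/-- Membership in the set `L`: `f` is Borel measurable, `∫ f d(μκ₀) > −∞` and
`∫ f^C dμ̄ < ∞` (here `ν₀` plays the role of `μκ₀`; note that the lower Lebesgue integral
used in `sint` is defined for arbitrary, not necessarily Borel measurable, functions, which
corresponds to integration of the universally measurable function `f^C` with respect to the
extension `μ̄` of `μ` to the universal σ-algebra). -/
def memL {X Y : Type*} [MeasurableSpace X] [MeasurableSpace Y]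
    (μ : Measure X) (ν₀ : Measure Y) (C : X → Measure Y → ℝ≥0∞) (f : Y → EReal) : Prop :=
  Measurable f ∧ ⊥ < sint ν₀ f ∧ sint μ (Ctrans C f) < ⊤


namespace KRaux

lemma posPart_coe (r : ℝ) : EReal.posPart (r : EReal) = ENNReal.ofReal r := by
  rw [EReal.posPart]
  rw [show (max (r : EReal) 0) = ((max r 0 : ℝ) : EReal) by
    rcases le_total r 0 with h | h <;>
      simp [max_eq_left, max_eq_right, h, EReal.coe_nonneg.2, EReal.coe_nonpos.2]]
  rw [EReal.abs_def, abs_of_nonneg (le_max_right r 0)]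
  rcases le_total r 0 with h | h
  · simp [max_eq_right h, ENNReal.ofReal_eq_zero.2 h]
  · rw [max_eq_left h]

lemma posPart_top : EReal.posPart ⊤ = ⊤ := rfl

lemma posPart_bot : EReal.posPart ⊥ = 0 := by
  rw [EReal.posPart, max_eq_right bot_le, EReal.abs_zero]

lemma abs_le_abs_of_nonneg : ∀ u v : EReal, 0 ≤ u → u ≤ v → u.abs ≤ v.abs := by
  intro u v h0 h1
  induction u using EReal.rec with
  | bot => exact absurd h0 (by simp)
  | top => rw [top_le_iff.1 h1]
  | coe a =>
    have h0' : (0 : EReal) ≤ v := le_trans h0 h1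
    induction v using EReal.rec with
    | bot => exact absurd h0' (by simp)
    | top => simp
    | coe b =>
      rw [EReal.abs_def, EReal.abs_def]
      exact ENNReal.ofReal_le_ofReal (by
        rw [abs_of_nonneg (EReal.coe_nonneg.1 h0), abs_of_nonneg (EReal.coe_nonneg.1 h0')]
        exact EReal.coe_le_coe_iff.1 h1)

lemma posPart_mono : Monotone EReal.posPart := by
  intro x y hxy
  exact abs_le_abs_of_nonneg _ _ (le_max_right _ _) (max_le_max hxy le_rfl)

lemma measurable_abs : Measurable EReal.abs := by
  apply EReal.measurable_of_measurable_real
  simp only [EReal.abs_def]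
  exact ENNReal.measurable_ofReal.comp (continuous_abs.measurable)

lemma measurable_posPart : Measurable EReal.posPart :=
  measurable_abs.comp (measurable_id.max measurable_const)

lemma coe_ennreal_ne_top (u : ℝ≥0∞) (hu : u ≠ ⊤) :
    (u : EReal) = ((u.toReal : ℝ) : EReal) := by
  conv_lhs => rw [← ENNReal.coe_toNNReal hu]
  rw [EReal.coe_nnreal_eq_coe_real]
  rfl

lemma coe_sub_coe (u v : ℝ≥0∞) (hu : u ≠ ⊤) (hv : v ≠ ⊤) :
    (u : EReal) - v = ((u.toReal - v.toReal : ℝ) : EReal) := by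
  rw [coe_ennreal_ne_top u hu, coe_ennreal_ne_top v hv, ← EReal.coe_sub]

lemma top_sub_ne_top (v : ℝ≥0∞) (hv : v ≠ ⊤) : (⊤ : EReal) - v = ⊤ := by
  rw [coe_ennreal_ne_top v hv]; exact EReal.top_sub_coe _

lemma posPart_sub_sub (a b c : ℝ≥0∞) :
    EReal.posPart ((a : EReal) - b - c) = a - (b + c) := by
  rcases eq_or_ne b ⊤ with hb | hb
  · rw [hb, EReal.coe_ennreal_top, EReal.sub_top, EReal.bot_sub, posPart_bot]
    simp [ENNReal.sub_top]
  rcases eq_or_ne c ⊤ with hc | hc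
  · rw [hc, EReal.coe_ennreal_top, EReal.sub_top, posPart_bot]
    simp [ENNReal.sub_top]
  rcases eq_or_ne a ⊤ with ha | ha
  · rw [ha, EReal.coe_ennreal_top, top_sub_ne_top b hb, top_sub_ne_top c hc, posPart_top,
      ENNReal.top_sub (by simp [ENNReal.add_eq_top, hb, hc])]
  · have hbc : b + c ≠ ⊤ := by simp [ENNReal.add_eq_top, hb, hc]
    have hR : a - (b + c) = ENNReal.ofReal (a.toReal - (b.toReal + c.toReal)) := by
      conv_lhs => rw [← ENNReal.ofReal_toReal ha, ← ENNReal.ofReal_toReal hbc]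
      rw [← ENNReal.ofReal_sub _ ENNReal.toReal_nonneg, ENNReal.toReal_add hb hc]
    rw [coe_sub_coe a b ha hb, coe_ennreal_ne_top c hc, ← EReal.coe_sub, posPart_coe, hR]
    congr 1
    ring

lemma negPart_sub_sub (a b c : ℝ≥0∞) :
    EReal.posPart (-((a : EReal) - b - c)) = if b + c = ⊤ then ⊤ else (b + c) - a := by
  rcases eq_or_ne b ⊤ with hb | hb
  · rw [hb, EReal.coe_ennreal_top, EReal.sub_top, EReal.bot_sub]
    simp [hb, posPart_top]
  rcases eq_or_ne c ⊤ with hc | hc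
  · rw [hc, EReal.coe_ennreal_top, EReal.sub_top]
    simp [hc, posPart_top]
  have hbc : b + c ≠ ⊤ := by simp [ENNReal.add_eq_top, hb, hc]
  rw [if_neg hbc]
  rcases eq_or_ne a ⊤ with ha | ha
  · rw [ha, EReal.coe_ennreal_top, top_sub_ne_top b hb, top_sub_ne_top c hc]
    rw [show (-(⊤:EReal)) = ⊥ from rfl, posPart_bot, ENNReal.sub_top]
  · have hR : (b + c) - a = ENNReal.ofReal ((b.toReal + c.toReal) - a.toReal) := by
      conv_lhs => rw [← ENNReal.ofReal_toReal hbc, ← ENNReal.ofReal_toReal ha]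
      rw [← ENNReal.ofReal_sub _ ENNReal.toReal_nonneg, ENNReal.toReal_add hb hc]
    rw [coe_sub_coe a b ha hb, coe_ennreal_ne_top c hc, ← EReal.coe_sub, ← EReal.coe_neg,
      posPart_coe, hR]
    congr 1
    ring

lemma posPart_sub (a b : ℝ≥0∞) : EReal.posPart ((a : EReal) - b) = a - b := by
  have := posPart_sub_sub a b 0
  simpa using this

lemma negPart_sub (a b : ℝ≥0∞) :
    EReal.posPart (-((a : EReal) - b)) = if b = ⊤ then ⊤ else b - a := by
  have := negPart_sub_sub a b 0
  simpa using this

lemma ereal_le_of_forall_sub (x : ℝ) (y : EReal)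
    (h : ∀ ε : ℝ, 0 < ε → ((x - ε : ℝ) : EReal) ≤ y) : (x : EReal) ≤ y := by
  by_contra hc
  push_neg at hc
  induction y using EReal.rec with
  | bot =>
    have := h 1 one_pos
    simp only [le_bot_iff] at this
    exact EReal.coe_ne_bot _ this
  | top => exact absurd hc (not_lt_of_ge le_top)
  | coe s =>
    have hs : s < x := EReal.coe_lt_coe_iff.1 hc
    have := h ((x - s) / 2) (by linarith)
    rw [EReal.coe_le_coe_iff] at this
    linarith

lemma sub_iInf_le {ι : Sort*} (a : EReal) (s : ι → ℝ≥0∞) :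
    a - ((⨅ i, s i : ℝ≥0∞) : EReal) ≤ ⨆ i, (a - (s i : EReal)) := by
  by_cases ht : (⨅ i, s i : ℝ≥0∞) = ⊤
  · rcases eq_or_ne a ⊤ with ha | ha
    · rw [ht, ha, EReal.coe_ennreal_top]
      rw [show (⊤ : EReal) - ⊤ = ⊥ by rfl]
      exact bot_le
    · rw [ht, EReal.coe_ennreal_top, EReal.sub_top]
      exact bot_le
  · induction a using EReal.rec with
    | bot => rw [EReal.bot_sub]; exact bot_le
    | top =>
      obtain ⟨i, hi⟩ : ∃ i, s i ≠ ⊤ := by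
        by_contra hco
        push_neg at hco
        exact ht (iInf_eq_top.2 hco)
      calc (⊤ : EReal) - _ ≤ ⊤ := le_top
        _ = ⊤ - (s i : EReal) := (top_sub_ne_top _ hi).symm
        _ ≤ _ := le_iSup (fun i => (⊤ : EReal) - (s i : EReal)) i
    | coe r =>
      set t := (⨅ i, s i : ℝ≥0∞) with htdef
      rw [coe_ennreal_ne_top t ht, ← EReal.coe_sub]
      apply ereal_le_of_forall_sub
      intro ε hε
      have hlt : t < t + ENNReal.ofReal ε :=
        ENNReal.lt_add_right ht (ne_of_gt (ENNReal.ofReal_pos.2 hε))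
      obtain ⟨i, hi⟩ := iInf_lt_iff.1 (htdef ▸ hlt)
      have hitop : s i ≠ ⊤ := by finiteness
      have hire : (s i).toReal ≤ t.toReal + ε := by
        have := ENNReal.toReal_mono (by finiteness) hi.le
        rwa [ENNReal.toReal_add ht (by finiteness), ENNReal.toReal_ofReal hε.le] at this
      calc ((r - t.toReal - ε : ℝ) : EReal) ≤ ((r - (s i).toReal : ℝ) : EReal) :=
            EReal.coe_le_coe_iff.2 (by linarith)
        _ = (r : EReal) - (s i : EReal) := by rw [coe_ennreal_ne_top _ hitop, ← EReal.coe_sub]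
        _ ≤ _ := le_iSup (fun i => (r : EReal) - (s i : EReal)) i

lemma isProbabilityMeasure_bind {X Y : Type*} [MeasurableSpace X] [MeasurableSpace Y]
    (μ : Measure X) [IsProbabilityMeasure μ] (κ : Kernel X Y) [IsMarkovKernel κ] :
    IsProbabilityMeasure (μ.bind ⇑κ) :=
  ⟨by rw [Measure.bind_apply MeasurableSet.univ κ.measurable.aemeasurable]; simp⟩

lemma measurable_N {α : Type*} [MeasurableSpace α] {A B c : α → ℝ≥0∞}
    (hA : Measurable A) (hB : Measurable B) (hc : Measurable c) :
    Measurable (fun x => if B x + c x = ⊤ then (⊤ : ℝ≥0∞) else (B x + c x) - A x) := by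
  apply Measurable.ite ((hB.add hc) (measurableSet_singleton ⊤)) measurable_const
  exact (hB.add hc).sub hA

lemma D_le_E {α : Type*} [MeasurableSpace α] (μ : Measure α)
    (A B c : α → ℝ≥0∞) (hA : Measurable A) (hB : Measurable B) (hc : Measurable c) :
    ((∫⁻ x, A x ∂μ : ℝ≥0∞) : EReal) - ((∫⁻ x, B x ∂μ : ℝ≥0∞) : EReal)
        - ((∫⁻ x, c x ∂μ : ℝ≥0∞) : EReal)
      ≤ ((∫⁻ x, A x - (B x + c x) ∂μ : ℝ≥0∞) : EReal)
        - ((∫⁻ x, (if B x + c x = ⊤ then ⊤ else (B x + c x) - A x) ∂μ : ℝ≥0∞) : EReal) := by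
  set N := fun x => if B x + c x = ⊤ then (⊤ : ℝ≥0∞) else (B x + c x) - A x with hN
  have hNmeas : Measurable N := measurable_N hA hB hc
  have hNle : ∀ x, N x ≤ B x + c x := by
    intro x
    show (if B x + c x = ⊤ then (⊤:ℝ≥0∞) else (B x + c x) - A x) ≤ B x + c x
    by_cases h : B x + c x = ⊤
    · rw [if_pos h, h]
    · rw [if_neg h]; exact tsub_le_self
  by_cases hcT : ∫⁻ x, c x ∂μ = ⊤
  · rw [hcT, EReal.coe_ennreal_top, EReal.sub_top]; exact bot_le
  by_cases hBT : ∫⁻ x, B x ∂μ = ⊤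
  · rw [hBT, EReal.coe_ennreal_top, EReal.sub_top, EReal.bot_sub]; exact bot_le
  have hBc : ∫⁻ x, (B x + c x) ∂μ = (∫⁻ x, B x ∂μ) + ∫⁻ x, c x ∂μ := lintegral_add_left hB _
  have hBcT : ∫⁻ x, (B x + c x) ∂μ ≠ ⊤ := by rw [hBc]; finiteness
  have hNT : ∫⁻ x, N x ∂μ ≠ ⊤ := ne_top_of_le_ne_top hBcT (lintegral_mono hNle)
  by_cases hAT : ∫⁻ x, A x ∂μ = ⊤
  · have hgT : ∫⁻ x, (A x - (B x + c x)) ∂μ = ⊤ := by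
      by_contra h
      have h1 : ∫⁻ x, A x ∂μ ≤ ∫⁻ x, ((A x - (B x + c x)) + (B x + c x)) ∂μ :=
        lintegral_mono fun x => le_tsub_add
      rw [lintegral_add_left (f := fun x => A x - (B x + c x)) (hA.sub (hB.add hc)) _] at h1
      exact (ne_top_of_le_ne_top (by finiteness) h1) hAT
    rw [hgT, EReal.coe_ennreal_top, top_sub_ne_top _ hNT]
    exact le_top
  · have haeB := ae_lt_top hB hBT
    have haeC := ae_lt_top hc hcT
    have haeId : ∀ᵐ x ∂μ, (A x - (B x + c x)) + (B x + c x) = N x + A x := by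
      filter_upwards [haeB, haeC] with x hb hc'
      have hbc : B x + c x ≠ ⊤ := by finiteness
      rw [hN]
      simp only [if_neg hbc]
      rw [tsub_add_eq_max, add_comm ((B x + c x) - A x) (A x), add_tsub_eq_max]
    have hInt : (∫⁻ x, (A x - (B x + c x)) ∂μ) + (∫⁻ x, (B x + c x) ∂μ)
        = (∫⁻ x, N x ∂μ) + ∫⁻ x, A x ∂μ := by
      rw [← lintegral_add_left (f := fun x => A x - (B x + c x)) (hA.sub (hB.add hc)) _, ← lintegral_add_left hNmeas]
      exact lintegral_congr_ae haeId
    have hgle : ∫⁻ x, (A x - (B x + c x)) ∂μ ≤ ∫⁻ x, A x ∂μ :=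
      lintegral_mono fun x => tsub_le_self
    have hgT : ∫⁻ x, (A x - (B x + c x)) ∂μ ≠ ⊤ := ne_top_of_le_ne_top hAT hgle
    rw [coe_sub_coe _ _ hAT hBT, coe_ennreal_ne_top _ hcT, ← EReal.coe_sub,
      coe_sub_coe _ _ hgT hNT, EReal.coe_le_coe_iff]
    have := congrArg ENNReal.toReal hInt
    rw [ENNReal.toReal_add hgT hBcT, ENNReal.toReal_add hNT hAT, hBc,
      ENNReal.toReal_add hBT hcT] at this
    linarith

lemma exists_le_add {e : ℝ≥0∞} (he : e ≠ 0) (u : ℝ≥0∞) (un : ℕ → ℝ≥0∞) (hu : u ≠ ⊤)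
    (h : u = ⨆ n, un n) : ∃ n, u ≤ un n + e := by
  by_cases h0 : u ≤ e
  · exact ⟨0, h0.trans le_add_self⟩
  · push_neg at h0
    have hu0 : u ≠ 0 := fun h' => by simp [h'] at h0
    have hlt : u - e < u := ENNReal.sub_lt_self hu hu0 he
    conv at hlt => rw [h]; rfl
    obtain ⟨n, hn⟩ := lt_iSup_iff.1 (by rw [← h] at hlt ⊢; exact hlt : u - e < ⨆ n, un n)
    exact ⟨n, tsub_le_iff_right.1 hn.le⟩

/-- Unfolding of the `E`-functional into two `ℝ≥0∞` integrals. -/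
lemma E_eq {X Y : Type*} [MeasurableSpace X] [MeasurableSpace Y]
    (μ : Measure X) (C : X → Measure Y → ℝ≥0∞) (f : Y → EReal) (κ : Kernel X Y) :
    sint μ (fun x => sint (κ x) f - ((C x (κ x) : ℝ≥0∞) : EReal))
      = ((∫⁻ x, (∫⁻ y, (f y).posPart ∂κ x)
            - ((∫⁻ y, (-(f y)).posPart ∂κ x) + C x (κ x)) ∂μ : ℝ≥0∞) : EReal)
        - ((∫⁻ x, (if (∫⁻ y, (-(f y)).posPart ∂κ x) + C x (κ x) = ⊤ then ⊤
            else ((∫⁻ y, (-(f y)).posPart ∂κ x) + C x (κ x))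
              - (∫⁻ y, (f y).posPart ∂κ x)) ∂μ : ℝ≥0∞) : EReal) := by
  rw [sint]
  have h1 : (∫⁻ x, (sint (κ x) f - ((C x (κ x) : ℝ≥0∞) : EReal)).posPart ∂μ)
      = ∫⁻ x, (∫⁻ y, (f y).posPart ∂κ x)
          - ((∫⁻ y, (-(f y)).posPart ∂κ x) + C x (κ x)) ∂μ := by
    refine lintegral_congr fun x => ?_
    rw [sint]
    exact posPart_sub_sub _ _ _
  have h2 : (∫⁻ x, (-(sint (κ x) f - ((C x (κ x) : ℝ≥0∞) : EReal))).posPart ∂μ)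
      = ∫⁻ x, (if (∫⁻ y, (-(f y)).posPart ∂κ x) + C x (κ x) = ⊤ then ⊤
          else ((∫⁻ y, (-(f y)).posPart ∂κ x) + C x (κ x))
            - (∫⁻ y, (f y).posPart ∂κ x)) ∂μ := by
    refine lintegral_congr fun x => ?_
    rw [sint]
    exact negPart_sub_sub _ _ _
  rw [h1, h2]

end KRaux

/-- For every `f ∈ L`, the risk measure `ρ` admits the kernel representation
`ρ(f) = sup_{κ ∈ ker(X,Y)} ∫_X ( ∫_Y f(y) κ(x,dy) − C(x,κ(x)) ) μ(dx)`,
where the integrand is evaluated with the convention `∞ − ∞ = −∞`. -/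
theorem kernel_representation
    {X Y : Type*} [MeasurableSpace X] [StandardBorelSpace X]
    [MeasurableSpace Y] [StandardBorelSpace Y]
    (μ : Measure X) [IsProbabilityMeasure μ]
    (C : X → Measure Y → ℝ≥0∞)
    (hC : Measurable fun p : X × Measure Y => C p.1 p.2)
    (κ₀ : Kernel X Y) [IsMarkovKernel κ₀]
    (hκ₀ : ∀ᵐ x ∂μ, C x (κ₀ x) = 0)
    (f : Y → EReal) (hf : memL μ (μ.bind κ₀) C f) :
    rho μ C f = ⨆ (κ : Kernel X Y) (_ : IsMarkovKernel κ),
      sint μ (fun x => sint (κ x) f - (C x (κ x) : EReal)) := by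
  classical
  obtain ⟨hfm, hbot, htop⟩ := hf
  -- measurability of the positive and negative parts of f
  have hpf : Measurable fun y => (f y).posPart := KRaux.measurable_posPart.comp hfm
  have hnf : Measurable fun y => (-(f y)).posPart := by
    have hneg : Antitone (fun x : EReal => -x) := fun a b hab => EReal.neg_le_neg_iff.2 hab
    have : (fun y => (-(f y)).posPart) = fun y => (min (f y) 0).abs := by
      funext y
      have hmm : max (-(f y)) 0 = -(min (f y) 0) := by
        rw [hneg.map_min]
        congr 1
        simp
      rw [EReal.posPart, hmm]
      exact EReal.abs_neg _
    rw [this]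
    exact KRaux.measurable_abs.comp (hfm.min measurable_const)
  -- kernel integrals
  have hkm : ∀ (κ : Kernel X Y), IsMarkovKernel κ →
      Measurable fun x => ∫⁻ y, (f y).posPart ∂κ x := by
    intro κ hMk
    exact Measurable.lintegral_kernel_prod_right' (hpf.comp measurable_snd)
  have hkm' : ∀ (κ : Kernel X Y), IsMarkovKernel κ →
      Measurable fun x => ∫⁻ y, (-(f y)).posPart ∂κ x := by
    intro κ hMk
    exact Measurable.lintegral_kernel_prod_right' (hnf.comp measurable_snd)
  have hcm : ∀ (κ : Kernel X Y), Measurable fun x => C x (κ x) := fun κ =>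
    hC.comp (measurable_id.prodMk κ.measurable)
  have hbindp : ∀ (κ : Kernel X Y),
      ∫⁻ y, (f y).posPart ∂(μ.bind ⇑κ) = ∫⁻ x, ∫⁻ y, (f y).posPart ∂κ x ∂μ := fun κ =>
    Measure.lintegral_bind κ.measurable.aemeasurable hpf.aemeasurable
  have hbindn : ∀ (κ : Kernel X Y),
      ∫⁻ y, (-(f y)).posPart ∂(μ.bind ⇑κ) = ∫⁻ x, ∫⁻ y, (-(f y)).posPart ∂κ x ∂μ := fun κ =>
    Measure.lintegral_bind κ.measurable.aemeasurable hnf.aemeasurable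
  -- the B₀ integral is finite
  have hB₀T : ∫⁻ x, ∫⁻ y, (-(f y)).posPart ∂κ₀ x ∂μ ≠ ⊤ := by
    intro hT
    rw [sint, hbindn κ₀, hT, EReal.coe_ennreal_top, EReal.sub_top] at hbot
    exact absurd hbot (lt_irrefl ⊥)
  -- C-transform lower bound
  have hCtrans_lb : ∀ (ϑ : Measure Y) [IsProbabilityMeasure ϑ] (x : X),
      sint ϑ f - ((C x ϑ : ℝ≥0∞) : EReal) ≤ Ctrans C f x := by
    intro ϑ hϑ x
    rw [Ctrans]
    exact le_iSup₂ (f := fun (ϑ : Measure Y) (_ : IsProbabilityMeasure ϑ) =>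
      sint ϑ f - ((C x ϑ : ℝ≥0∞) : EReal)) ϑ hϑ
  have haeN : ∀ᵐ x ∂μ, (-(Ctrans C f x)).posPart ≤ ∫⁻ y, (-(f y)).posPart ∂κ₀ x := by
    filter_upwards [hκ₀, ae_lt_top (hkm' κ₀ inferInstance) hB₀T] with x h0 hBx
    have h1 : sint (κ₀ x) f ≤ Ctrans C f x := by
      have h2 := hCtrans_lb (κ₀ x) x
      rw [h0, EReal.coe_ennreal_zero] at h2
      rw [show sint (κ₀ x) f - 0 = sint (κ₀ x) f by
        rw [sub_eq_add_neg, neg_zero, add_zero]] at h2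
      exact h2
    calc (-(Ctrans C f x)).posPart ≤ (-(sint (κ₀ x) f)).posPart :=
          KRaux.posPart_mono (EReal.neg_le_neg_iff.2 h1)
      _ = if (∫⁻ y, (-(f y)).posPart ∂κ₀ x) = ⊤ then ⊤
            else (∫⁻ y, (-(f y)).posPart ∂κ₀ x) - ∫⁻ y, (f y).posPart ∂κ₀ x := by
          rw [sint]; exact KRaux.negPart_sub _ _
      _ ≤ ∫⁻ y, (-(f y)).posPart ∂κ₀ x := by rw [if_neg hBx.ne]; exact tsub_le_self
  have hQT : ∫⁻ x, (-(Ctrans C f x)).posPart ∂μ ≠ ⊤ :=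
    ne_top_of_le_ne_top hB₀T (lintegral_mono_ae haeN)
  have hPT : ∫⁻ x, (Ctrans C f x).posPart ∂μ ≠ ⊤ := by
    intro hT
    rw [sint, hT, EReal.coe_ennreal_top, KRaux.top_sub_ne_top _ hQT] at htop
    exact absurd htop (lt_irrefl ⊤)
  -- pointwise bound by C-transform for Markov kernels
  have hgleP : ∀ (κ : Kernel X Y), IsMarkovKernel κ → ∀ x,
      ((∫⁻ y, (f y).posPart ∂κ x) - ((∫⁻ y, (-(f y)).posPart ∂κ x) + C x (κ x)))
        ≤ (Ctrans C f x).posPart := by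
    intro κ hM x
    haveI := hM
    have h1 : sint (κ x) f - ((C x (κ x) : ℝ≥0∞) : EReal) ≤ Ctrans C f x := hCtrans_lb (κ x) x
    calc ((∫⁻ y, (f y).posPart ∂κ x) - ((∫⁻ y, (-(f y)).posPart ∂κ x) + C x (κ x)))
        = (sint (κ x) f - ((C x (κ x) : ℝ≥0∞) : EReal)).posPart := by
          rw [sint]; exact (KRaux.posPart_sub_sub _ _ _).symm
      _ ≤ (Ctrans C f x).posPart := KRaux.posPart_mono h1
  apply le_antisymm
  · -- rho ≤ sup of E
    rw [rho]
    apply iSup₂_le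
    intro ν hν
    rw [wotCost]
    refine le_trans (KRaux.sub_iInf_le _ _) (iSup_le fun κ => ?_)
    refine le_trans (KRaux.sub_iInf_le _ _) (iSup_le fun hM => ?_)
    refine le_trans (KRaux.sub_iInf_le _ _) (iSup_le fun hb => ?_)
    haveI := hM
    subst hb
    have e1 : sint (μ.bind ⇑κ) f
        = ((∫⁻ x, ∫⁻ y, (f y).posPart ∂κ x ∂μ : ℝ≥0∞) : EReal)
          - ((∫⁻ x, ∫⁻ y, (-(f y)).posPart ∂κ x ∂μ : ℝ≥0∞) : EReal) := by
      rw [sint, hbindp κ, hbindn κ]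
    rw [e1]
    refine le_trans (KRaux.D_le_E μ _ _ _ (hkm κ hM) (hkm' κ hM) (hcm κ)) ?_
    rw [← KRaux.E_eq μ C f κ]
    exact le_iSup₂ (f := fun (κ : Kernel X Y) (_ : IsMarkovKernel κ) =>
      sint μ fun x => sint (κ x) f - ((C x (κ x) : ℝ≥0∞) : EReal)) κ hM
  · -- sup of E ≤ rho
    apply iSup₂_le
    intro κ hM
    haveI := hM
    rw [KRaux.E_eq μ C f κ]
    set A : X → ℝ≥0∞ := fun x => ∫⁻ y, (f y).posPart ∂κ x with hA
    set B : X → ℝ≥0∞ := fun x => ∫⁻ y, (-(f y)).posPart ∂κ x with hB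
    set c : X → ℝ≥0∞ := fun x => C x (κ x) with hc
    set A₀ : X → ℝ≥0∞ := fun x => ∫⁻ y, (f y).posPart ∂κ₀ x with hA₀
    set B₀ : X → ℝ≥0∞ := fun x => ∫⁻ y, (-(f y)).posPart ∂κ₀ x with hB₀
    set Np : X → ℝ≥0∞ := fun x => A x - (B x + c x) with hNp
    set Nm : X → ℝ≥0∞ := fun x => if B x + c x = ⊤ then ⊤ else (B x + c x) - A x with hNm
    have hAm : Measurable A := hkm κ hM
    have hBm : Measurable B := hkm' κ hM
    have hcm' : Measurable c := hcm κ
    have hA₀m : Measurable A₀ := hkm κ₀ inferInstance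
    have hB₀m : Measurable B₀ := hkm' κ₀ inferInstance
    have hNpm : Measurable Np := hAm.sub (hBm.add hcm')
    have hNmm : Measurable Nm := KRaux.measurable_N hAm hBm hcm'
    set p := ∫⁻ x, Np x ∂μ with hp
    set q := ∫⁻ x, Nm x ∂μ with hq'
    show (p : EReal) - (q : EReal) ≤ rho μ C f
    by_cases hq : q = ⊤
    · rw [hq, EReal.coe_ennreal_top, EReal.sub_top]; exact bot_le
    have hpT : p ≠ ⊤ :=
      ne_top_of_le_ne_top hPT (lintegral_mono fun x => hgleP κ hM x)
    rw [KRaux.coe_sub_coe p q hpT hq]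
    apply KRaux.ereal_le_of_forall_sub
    intro ε hε
    -- the set where everything is finite has full measure
    have haeU : ∀ᵐ x ∂μ, A x < ⊤ ∧ B x + c x < ⊤ := by
      filter_upwards [ae_lt_top hNpm hpT, ae_lt_top hNmm hq] with x h1 h2
      have hbc : B x + c x < ⊤ := by
        by_contra h
        have hbc' : B x + c x = ⊤ := by rwa [lt_top_iff_ne_top, not_ne_iff] at h
        rw [hNm] at h2
        simp only [if_pos hbc'] at h2
        exact absurd h2 (lt_irrefl ⊤)
      refine ⟨?_, hbc⟩
      by_contra h
      have hA' : A x = ⊤ := by rwa [lt_top_iff_ne_top, not_ne_iff] at h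
      rw [hNp] at h1
      simp only [hA', ENNReal.top_sub hbc.ne] at h1
      exact absurd h1 (lt_irrefl ⊤)
    set G : ℕ → Set X := fun n => {x | A x ≤ n ∧ B x + c x ≤ n} with hG
    have hGm : ∀ n, MeasurableSet (G n) := fun n =>
      (hAm measurableSet_Iic).inter ((hBm.add hcm') measurableSet_Iic)
    have hGmono : Monotone G := by
      intro m n hmn x hx
      have hcast : (m : ℝ≥0∞) ≤ (n : ℝ≥0∞) := Nat.cast_le.2 hmn
      exact ⟨hx.1.trans hcast, hx.2.trans hcast⟩
    have hGU : ∀ᵐ x ∂μ, x ∈ ⋃ n, G n := by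
      filter_upwards [haeU] with x hx
      obtain ⟨n₁, hn₁⟩ := ENNReal.exists_nat_gt hx.1.ne
      obtain ⟨n₂, hn₂⟩ := ENNReal.exists_nat_gt hx.2.ne
      refine Set.mem_iUnion.2 ⟨n₁ ⊔ n₂, ?_, ?_⟩
      · exact hn₁.le.trans (Nat.cast_le.2 le_sup_left)
      · exact hn₂.le.trans (Nat.cast_le.2 le_sup_right)
    have hsup : ∀ (h : X → ℝ≥0∞), Measurable h →
        (⨆ n, ∫⁻ x, (G n).indicator h x ∂μ) = ∫⁻ x, h x ∂μ := by
      intro h hm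
      rw [← lintegral_iSup (fun n => hm.indicator (hGm n))
        (fun m n hmn x => Set.indicator_le_indicator_of_subset (hGmono hmn)
          (fun _ => zero_le) x)]
      apply lintegral_congr_ae
      filter_upwards [hGU] with x hx
      obtain ⟨n, hn⟩ := Set.mem_iUnion.1 hx
      refine le_antisymm (iSup_le fun m => Set.indicator_le_self _ _ x) ?_
      rw [← Set.indicator_of_mem hn h]
      exact le_iSup (fun m => (G m).indicator h x) n
    have hmono_int : ∀ (h : X → ℝ≥0∞), Monotone (fun n => ∫⁻ x, (G n).indicator h x ∂μ) :=
      fun h m n hmn => lintegral_mono fun x =>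
        Set.indicator_le_indicator_of_subset (hGmono hmn) (fun _ => zero_le) x
    have hε2 : (ENNReal.ofReal (ε / 2)) ≠ 0 := ne_of_gt (ENNReal.ofReal_pos.2 (by linarith))
    obtain ⟨n₁, hn₁⟩ := KRaux.exists_le_add hε2 p _ hpT (hsup Np hNpm).symm
    have hsB₀T : ∫⁻ x, B₀ x ∂μ ≠ ⊤ := hB₀T
    obtain ⟨n₂, hn₂⟩ := KRaux.exists_le_add hε2 (∫⁻ x, B₀ x ∂μ) _ hsB₀T (hsup B₀ hB₀m).symm
    set n := n₁ ⊔ n₂ with hn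
    have hn₁' : p ≤ (∫⁻ x, (G n).indicator Np x ∂μ) + ENNReal.ofReal (ε / 2) :=
      hn₁.trans (add_le_add_left (hmono_int Np le_sup_left) _)
    have hn₂' : (∫⁻ x, B₀ x ∂μ) ≤ (∫⁻ x, (G n).indicator B₀ x ∂μ) + ENNReal.ofReal (ε / 2) :=
      hn₂.trans (add_le_add_left (hmono_int B₀ le_sup_right) _)
    set κ' := Kernel.piecewise (hGm n) κ κ₀ with hκ'
    haveI hM' : IsMarkovKernel κ' := by rw [hκ']; infer_instance
    haveI hprob' : IsProbabilityMeasure (μ.bind ⇑κ') := KRaux.isProbabilityMeasure_bind μ κ'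
    -- lower bound of rho via ν' = μ.bind κ'
    have hwot : ((wotCost μ C (μ.bind ⇑κ') : ℝ≥0∞) : EReal)
        ≤ ((∫⁻ x, C x (κ' x) ∂μ : ℝ≥0∞) : EReal) := by
      apply EReal.coe_ennreal_le_coe_ennreal_iff.2
      rw [wotCost]
      exact iInf_le_of_le κ' (iInf_le_of_le hM' (iInf_le_of_le rfl le_rfl))
    have hrho : sint (μ.bind ⇑κ') f - ((∫⁻ x, C x (κ' x) ∂μ : ℝ≥0∞) : EReal) ≤ rho μ C f := by
      refine le_trans (EReal.sub_le_sub le_rfl hwot) ?_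
      rw [rho]
      exact le_iSup₂ (f := fun (ν : Measure Y) (_ : IsProbabilityMeasure ν) =>
        sint ν f - ((wotCost μ C ν : ℝ≥0∞) : EReal)) (μ.bind ⇑κ') hprob'
    refine le_trans ?_ hrho
    -- decompose the integrals for κ'
    have hsplit : ∀ (h₁ h₀ : X → ℝ≥0∞), Measurable h₁ →
        ∫⁻ x, (if x ∈ G n then h₁ x else h₀ x) ∂μ
          = (∫⁻ x, (G n).indicator h₁ x ∂μ) + ∫⁻ x, ((G n)ᶜ).indicator h₀ x ∂μ := by
      intro h₁ h₀ hm1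
      rw [← lintegral_add_left (hm1.indicator (hGm n))]
      refine lintegral_congr fun x => ?_
      by_cases hx : x ∈ G n
      · rw [if_pos hx, Set.indicator_of_mem hx,
          Set.indicator_of_notMem (Set.notMem_compl_iff.2 hx), add_zero]
      · rw [if_neg hx, Set.indicator_of_notMem hx,
          Set.indicator_of_mem (Set.mem_compl hx), zero_add]
    have hA'x : ∀ x, (∫⁻ y, (f y).posPart ∂κ' x) = if x ∈ G n then A x else A₀ x := by
      intro x
      rw [hκ', Kernel.piecewise_apply]
      exact apply_ite (fun (m : Measure Y) => ∫⁻ y, (f y).posPart ∂m) _ _ _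
    have hB'x : ∀ x, (∫⁻ y, (-(f y)).posPart ∂κ' x) = if x ∈ G n then B x else B₀ x := by
      intro x
      rw [hκ', Kernel.piecewise_apply]
      exact apply_ite (fun (m : Measure Y) => ∫⁻ y, (-(f y)).posPart ∂m) _ _ _
    have hc'x : ∀ x, C x (κ' x) = if x ∈ G n then c x else C x (κ₀ x) := by
      intro x
      rw [hκ', Kernel.piecewise_apply]
      exact apply_ite (fun (m : Measure Y) => C x m) _ _ _
    set aG := ∫⁻ x, (G n).indicator A x ∂μ with haG
    set a0 := ∫⁻ x, ((G n)ᶜ).indicator A₀ x ∂μ with ha0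
    set bG := ∫⁻ x, (G n).indicator B x ∂μ with hbG
    set b0 := ∫⁻ x, ((G n)ᶜ).indicator B₀ x ∂μ with hb0
    set cG := ∫⁻ x, (G n).indicator c x ∂μ with hcG
    have hIA : ∫⁻ x, ∫⁻ y, (f y).posPart ∂κ' x ∂μ = aG + a0 := by
      rw [show (fun x => ∫⁻ y, (f y).posPart ∂κ' x) = fun x => if x ∈ G n then A x else A₀ x
        from funext hA'x]
      exact hsplit A A₀ hAm
    have hIB : ∫⁻ x, ∫⁻ y, (-(f y)).posPart ∂κ' x ∂μ = bG + b0 := by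
      rw [show (fun x => ∫⁻ y, (-(f y)).posPart ∂κ' x) = fun x => if x ∈ G n then B x else B₀ x
        from funext hB'x]
      exact hsplit B B₀ hBm
    have hIc : ∫⁻ x, C x (κ' x) ∂μ = cG := by
      rw [show (fun x => C x (κ' x)) = fun x => if x ∈ G n then c x else C x (κ₀ x)
        from funext hc'x]
      rw [hsplit c _ hcm']
      have hzero : ∫⁻ x, ((G n)ᶜ).indicator (fun x => C x (κ₀ x)) x ∂μ = 0 := by
        have : ∀ᵐ x ∂μ, ((G n)ᶜ).indicator (fun x => C x (κ₀ x)) x = 0 := by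
          filter_upwards [hκ₀] with x hx
          by_cases hmem : x ∈ (G n)ᶜ
          · rw [Set.indicator_of_mem hmem, hx]
          · rw [Set.indicator_of_notMem hmem]
        rw [lintegral_congr_ae this, lintegral_zero]
      rw [hzero, add_zero]
    -- rewrite the goal
    rw [sint, hbindp κ', hbindn κ', hIA, hIB, hIc]
    -- finiteness of the G-restricted integrals
    have hconst : ∀ (h : X → ℝ≥0∞), (∀ x ∈ G n, h x ≤ n) →
        ∫⁻ x, (G n).indicator h x ∂μ ≤ n := by
      intro h hh
      calc ∫⁻ x, (G n).indicator h x ∂μ ≤ ∫⁻ _, (n : ℝ≥0∞) ∂μ := by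
            refine lintegral_mono fun x => ?_
            by_cases hx : x ∈ G n
            · rw [Set.indicator_of_mem hx]; exact hh x hx
            · rw [Set.indicator_of_notMem hx]; exact zero_le
        _ = n := by rw [lintegral_const, measure_univ, mul_one]
    have haGT : aG ≠ ⊤ := ne_top_of_le_ne_top (ENNReal.natCast_ne_top n)
      (hconst A fun x hx => hx.1)
    have hbGT : bG ≠ ⊤ := ne_top_of_le_ne_top (ENNReal.natCast_ne_top n)
      (hconst B fun x hx => le_trans le_self_add hx.2)
    have hcGT : cG ≠ ⊤ := ne_top_of_le_ne_top (ENNReal.natCast_ne_top n)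
      (hconst c fun x hx => le_trans le_add_self hx.2)
    have hb0T : b0 ≠ ⊤ :=
      ne_top_of_le_ne_top hsB₀T (lintegral_mono fun x => Set.indicator_le_self _ _ x)
    have hbb0T : bG + b0 ≠ ⊤ := by finiteness
    by_cases ha0T : a0 = ⊤
    · rw [ha0T, add_top, EReal.coe_ennreal_top, KRaux.top_sub_ne_top _ hbb0T,
        KRaux.top_sub_ne_top _ hcGT]
      exact le_top
    · -- everything is finite; pass to the reals
      have haa0T : aG + a0 ≠ ⊤ := by finiteness
      rw [KRaux.coe_sub_coe _ _ haa0T hbb0T, KRaux.coe_ennreal_ne_top _ hcGT, ← EReal.coe_sub,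
        EReal.coe_le_coe_iff]
      -- the key identity over G n
      have hIdG : (fun x => (G n).indicator Np x + (G n).indicator (fun x => B x + c x) x)
          = fun x => (G n).indicator Nm x + (G n).indicator A x := by
        funext x
        by_cases hx : x ∈ G n
        · simp only [Set.indicator_of_mem hx]
          have hbc : B x + c x ≠ ⊤ := ne_top_of_le_ne_top (ENNReal.natCast_ne_top n) hx.2
          rw [hNp, hNm]
          simp only [if_neg hbc]
          rw [tsub_add_eq_max, add_comm ((B x + c x) - A x) (A x), add_tsub_eq_max, max_comm]
        · simp [Set.indicator_of_notMem hx]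
      have hIntG : (∫⁻ x, (G n).indicator Np x ∂μ) + (bG + cG)
          = (∫⁻ x, (G n).indicator Nm x ∂μ) + aG := by
        have h1 : (∫⁻ x, (G n).indicator Np x ∂μ)
              + ∫⁻ x, (G n).indicator (fun x => B x + c x) x ∂μ
            = (∫⁻ x, (G n).indicator Nm x ∂μ) + ∫⁻ x, (G n).indicator A x ∂μ := by
          rw [← lintegral_add_left (hNpm.indicator (hGm n)),
            ← lintegral_add_left (hNmm.indicator (hGm n))]
          exact lintegral_congr fun x => congrFun hIdG x
        have h2 : ∫⁻ x, (G n).indicator (fun x => B x + c x) x ∂μ = bG + cG := by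
          rw [← lintegral_add_left (hBm.indicator (hGm n))]
          refine lintegral_congr fun x => ?_
          by_cases hx : x ∈ G n <;>
            simp [Set.indicator_of_mem, Set.indicator_of_notMem, hx]
        rw [← h2, h1]
      -- bounds
      have hpnT : (∫⁻ x, (G n).indicator Np x ∂μ) ≠ ⊤ :=
        ne_top_of_le_ne_top hpT (lintegral_mono fun x => Set.indicator_le_self _ _ x)
      have hnGT : (∫⁻ x, (G n).indicator Nm x ∂μ) ≠ ⊤ :=
        ne_top_of_le_ne_top hq (lintegral_mono fun x => Set.indicator_le_self _ _ x)
      have hnGq : (∫⁻ x, (G n).indicator Nm x ∂μ) ≤ q :=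
        lintegral_mono fun x => Set.indicator_le_self _ _ x
      -- split of ∫ B₀
      have hsB₀ : (∫⁻ x, (G n).indicator B₀ x ∂μ) + b0 = ∫⁻ x, B₀ x ∂μ := by
        rw [← lintegral_add_left (hB₀m.indicator (hGm n))]
        refine lintegral_congr fun x => ?_
        by_cases hx : x ∈ G n
        · rw [Set.indicator_of_mem hx,
            Set.indicator_of_notMem (Set.notMem_compl_iff.2 hx), add_zero]
        · rw [Set.indicator_of_notMem hx,
            Set.indicator_of_mem (Set.mem_compl hx), zero_add]
      have hsGB₀T : (∫⁻ x, (G n).indicator B₀ x ∂μ) ≠ ⊤ :=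
        ne_top_of_le_ne_top hsB₀T (lintegral_mono fun x => Set.indicator_le_self _ _ x)
      -- pass all quantities to ℝ
      have hId_real := congrArg ENNReal.toReal hIntG
      rw [ENNReal.toReal_add hpnT (by finiteness), ENNReal.toReal_add hnGT haGT,
        ENNReal.toReal_add hbGT hcGT] at hId_real
      have hn₁_real : p.toReal ≤ (∫⁻ x, (G n).indicator Np x ∂μ).toReal + ε / 2 := by
        have := ENNReal.toReal_mono (by finiteness) hn₁'
        rwa [ENNReal.toReal_add hpnT ENNReal.ofReal_ne_top,
          ENNReal.toReal_ofReal (by linarith)] at this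
      have hb0_real : b0.toReal ≤ ε / 2 := by
        have h3 := ENNReal.toReal_mono (by finiteness) hn₂'
        rw [ENNReal.toReal_add hsGB₀T ENNReal.ofReal_ne_top,
          ENNReal.toReal_ofReal (by linarith)] at h3
        have h4 := congrArg ENNReal.toReal hsB₀
        rw [ENNReal.toReal_add hsGB₀T hb0T] at h4
        linarith
      have hnG_real : (∫⁻ x, (G n).indicator Nm x ∂μ).toReal ≤ q.toReal :=
        ENNReal.toReal_mono hq hnGq
      rw [ENNReal.toReal_add haGT ha0T, ENNReal.toReal_add hbGT hb0T]
      have ha0_real : (0:ℝ) ≤ a0.toReal := ENNReal.toReal_nonneg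
      linarith


end
end

section
/- For every f ∈ L one has the two-sided bound ∫_Y f d(μκ₀) ≤ ρ(f) ≤ ∫_X f^C dμ̄; in particular the left-hand side is > −∞ and the right-hand side is < ∞, so ρ(f) is finite. -/
open MeasureTheory ProbabilityTheory
open scoped ENNReal NNReal

noncomputable section

lemma EReal.measurable_abs : Measurable EReal.abs := by
  apply EReal.measurable_of_measurable_real
  simpa [EReal.abs_def, Function.comp_def] using ENNReal.measurable_ofReal.comp (_root_.continuous_abs.measurable)

lemma EReal.measurable_posPart : Measurable EReal.posPart :=
  EReal.measurable_abs.comp (measurable_id.max measurable_const)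

lemma EReal.coe_abs_of_nonneg {y : EReal} (hy : 0 ≤ y) : ((y.abs : ℝ≥0∞) : EReal) = y := by
  induction y with
  | bot => simp at hy
  | coe r =>
    rw [EReal.coe_abs]
    exact congrArg Real.toEReal (abs_of_nonneg (by exact_mod_cast hy))
  | top => simp [EReal.abs_top, EReal.coe_ennreal_top]

lemma EReal.coe_posPart (x : EReal) : ((x.posPart : ℝ≥0∞) : EReal) = max x 0 :=
  EReal.coe_abs_of_nonneg (le_max_right _ _)

lemma EReal.posPart_coe_ennreal (a : ℝ≥0∞) : EReal.posPart (a : EReal) = a := by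
  apply EReal.coe_ennreal_injective
  rw [EReal.coe_posPart, max_eq_left (EReal.coe_ennreal_nonneg a)]

lemma EReal.posPart_of_nonpos {x : EReal} (hx : x ≤ 0) : x.posPart = 0 := by
  apply EReal.coe_ennreal_injective
  rw [EReal.coe_posPart, max_eq_right hx, EReal.coe_ennreal_zero]

lemma EReal.posPart_mono {x y : EReal} (h : x ≤ y) : x.posPart ≤ y.posPart := by
  rw [← EReal.coe_ennreal_le_coe_ennreal_iff, EReal.coe_posPart, EReal.coe_posPart]
  exact max_le_max h le_rfl

lemma EReal.coe_sub_coe_self (d : ℝ≥0∞) (hd : d ≠ ⊤) : (d : EReal) - (d : EReal) = 0 := by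
  lift d to ℝ≥0 using hd
  rw [EReal.coe_nnreal_eq_coe_real, ← EReal.coe_sub]
  simp

lemma EReal.posPart_coe_sub_coe (a d : ℝ≥0∞) (hd : d ≠ ⊤) :
    EReal.posPart ((a : EReal) - (d : EReal)) = a - d := by
  rcases le_total d a with h | h
  · rw [← ENNReal.toEReal_sub hd h, EReal.posPart_coe_ennreal]
  · have hnp : ((a : EReal) - d) ≤ 0 :=
      (EReal.sub_le_sub (EReal.coe_ennreal_le_coe_ennreal_iff.mpr h) le_rfl).trans_eq
        (EReal.coe_sub_coe_self d hd)
    rw [EReal.posPart_of_nonpos hnp, eq_comm, tsub_eq_zero_iff_le.mpr h]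

lemma EReal.negPart_coe_sub_coe (a d : ℝ≥0∞) (hd : d ≠ ⊤) :
    EReal.posPart (-((a : EReal) - (d : EReal))) = d - a := by
  rcases le_total d a with h | h
  · have h1 : ((a : EReal) - d) = ((a - d : ℝ≥0∞) : EReal) := (ENNReal.toEReal_sub hd h).symm
    rw [h1, EReal.posPart_of_nonpos (EReal.neg_le.mpr (by simpa using EReal.coe_ennreal_nonneg (a - d))),
      eq_comm, tsub_eq_zero_iff_le.mpr h]
  · have ha : a ≠ ⊤ := (h.trans_lt (lt_top_iff_ne_top.mpr hd)).ne
    have h1 : ((d : EReal) - a) = ((d - a : ℝ≥0∞) : EReal) := (ENNReal.toEReal_sub ha h).symm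
    rw [EReal.neg_sub (.inl (EReal.coe_ennreal_ne_bot a)) (.inl (by simp [ha])),
      add_comm, ← sub_eq_add_neg, h1, EReal.posPart_coe_ennreal]

/-- monotonicity of `sint`. -/
lemma sint_mono {α : Type*} [MeasurableSpace α] (μ : Measure α) {g h : α → EReal}
    (hgh : ∀ x, g x ≤ h x) : sint μ g ≤ sint μ h := by
  refine EReal.sub_le_sub ?_ ?_
  · exact EReal.coe_ennreal_le_coe_ennreal_iff.mpr
      (lintegral_mono fun x => EReal.posPart_mono (hgh x))
  · exact EReal.coe_ennreal_le_coe_ennreal_iff.mpr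
      (lintegral_mono fun x => EReal.posPart_mono (EReal.neg_le_neg_iff.mpr (hgh x)))


lemma ereal_sub_le_sub_of_add_eq {A D P N : ℝ≥0∞} (hD : D ≠ ⊤) (hN : N ≠ ⊤)
    (hkey : P + D = A + N) : (A : EReal) - (D : EReal) ≤ (P : EReal) - (N : EReal) := by
  by_cases hA : A = ⊤
  · have hP : P = ⊤ := by
      by_contra hP
      exact ENNReal.add_ne_top.mpr ⟨hP, hD⟩ (hkey.trans (by rw [hA, top_add]))
    lift N to ℝ≥0 using hN
    rw [hP, EReal.coe_ennreal_top, EReal.coe_nnreal_eq_coe_real, EReal.top_sub_coe]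
    exact le_top
  · have hP : P ≠ ⊤ := by
      intro hP
      rw [hP, top_add] at hkey
      exact ENNReal.add_ne_top.mpr ⟨hA, hN⟩ hkey.symm
    lift A to ℝ≥0 using hA
    lift D to ℝ≥0 using hD
    lift P to ℝ≥0 using hP
    lift N to ℝ≥0 using hN
    have hkey' : (P : ℝ) + D = A + N := by exact_mod_cast hkey
    simp only [EReal.coe_nnreal_eq_coe_real, ← EReal.coe_sub]
    exact EReal.coe_le_coe_iff.mpr (by linarith)

/-- Key inequality: `∫a - ∫d ≤ sint μ (a - d)` for `ℝ≥0∞`-valued `a`, `d`. -/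
lemma lintegral_sub_le_sint {α : Type*} [MeasurableSpace α] (μ : Measure α)
    (a d : α → ℝ≥0∞) (ha : Measurable a) (hd : Measurable d) :
    ((∫⁻ x, a x ∂μ : ℝ≥0∞) : EReal) - ((∫⁻ x, d x ∂μ : ℝ≥0∞) : EReal) ≤
      sint μ (fun x => (a x : EReal) - (d x : EReal)) := by
  by_cases hD : ∫⁻ x, d x ∂μ = ⊤
  · rw [hD, EReal.coe_ennreal_top, EReal.sub_top]; exact bot_le
  have hae : ∀ᵐ x ∂μ, d x ≠ ⊤ := by
    filter_upwards [ae_lt_top hd hD] with x hx using hx.ne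
  have hpos : ∫⁻ x, EReal.posPart ((a x : EReal) - (d x : EReal)) ∂μ = ∫⁻ x, a x - d x ∂μ :=
    lintegral_congr_ae (hae.mono fun x hx => EReal.posPart_coe_sub_coe _ _ hx)
  have hneg : ∫⁻ x, EReal.posPart (-((a x : EReal) - (d x : EReal))) ∂μ
      = ∫⁻ x, d x - a x ∂μ :=
    lintegral_congr_ae (hae.mono fun x hx => EReal.negPart_coe_sub_coe _ _ hx)
  simp only [sint]
  rw [hpos, hneg]
  have hNle : ∫⁻ x, d x - a x ∂μ ≤ ∫⁻ x, d x ∂μ := lintegral_mono fun x => tsub_le_self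
  refine ereal_sub_le_sub_of_add_eq hD (hNle.trans_lt (lt_top_iff_ne_top.mpr hD)).ne ?_
  rw [← lintegral_add_left (f := fun x => a x - d x) (ha.sub hd), ← lintegral_add_left ha]
  refine lintegral_congr_ae (hae.mono fun x hx => ?_)
  show a x - d x + d x = a x + (d x - a x)
  rcases le_total (d x) (a x) with h | h
  · rw [tsub_add_cancel_of_le h, tsub_eq_zero_iff_le.mpr h, add_zero]
  · rw [tsub_eq_zero_iff_le.mpr h, zero_add, add_tsub_cancel_of_le h]

lemma ereal_sub_iInf_le {ι : Type*} (P Q : ι → Prop) (c : ι → ℝ≥0∞) (x R : EReal)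
    (h : ∀ i, P i → Q i → x - ((c i : ℝ≥0∞) : EReal) ≤ R) :
    x - ((⨅ (i : ι) (_ : P i) (_ : Q i), c i : ℝ≥0∞) : EReal) ≤ R := by
  set m : ℝ≥0∞ := ⨅ (i : ι) (_ : P i) (_ : Q i), c i with hm'
  by_cases hm : m = ⊤
  · rw [hm, EReal.coe_ennreal_top, EReal.sub_top]; exact bot_le
  have hlt : ∀ t : ℝ≥0∞, m < t → ∃ i, P i ∧ Q i ∧ c i < t := by
    intro t ht
    simp only [hm', iInf_lt_iff] at ht
    tauto
  induction x with
  | bot => rw [EReal.bot_sub]; exact bot_le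
  | top =>
    obtain ⟨i, hP, hQ, hci⟩ := hlt ⊤ (lt_top_iff_ne_top.mpr hm)
    have h1 := h i hP hQ
    lift c i to ℝ≥0 using hci.ne with q hq
    rw [EReal.coe_nnreal_eq_coe_real, EReal.top_sub_coe] at h1
    have hR : R = ⊤ := top_le_iff.mp h1
    rw [hR]; exact le_top
  | coe r =>
    rw [← EReal.ge_of_forall_gt_iff_ge]
    intro z hz
    lift m to ℝ≥0 using hm with m' hm''
    rw [EReal.coe_nnreal_eq_coe_real, ← EReal.coe_sub] at hz
    have hz' : z < r - (m' : ℝ) := EReal.coe_lt_coe_iff.mp hz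
    have hε : 0 < r - m' - z := by linarith
    obtain ⟨i, hP, hQ, hci⟩ := hlt ((m' : ℝ≥0∞) + ENNReal.ofReal (r - m' - z))
      (ENNReal.lt_add_right (by simp) (by simp [ENNReal.ofReal_eq_zero, not_le]; linarith))
    have hcitop : c i ≠ ⊤ :=
      (hci.trans (ENNReal.add_lt_top.mpr ⟨ENNReal.coe_lt_top, ENNReal.ofReal_lt_top⟩)).ne
    have h1 := h i hP hQ
    have hle : (c i).toReal ≤ (m' : ℝ) + (r - m' - z) := by
      have h2 := (ENNReal.toReal_le_toReal hcitop
        (ENNReal.add_ne_top.mpr ⟨ENNReal.coe_ne_top, ENNReal.ofReal_ne_top⟩)).mpr hci.le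
      rwa [ENNReal.toReal_add ENNReal.coe_ne_top ENNReal.ofReal_ne_top, ENNReal.coe_toReal,
        ENNReal.toReal_ofReal hε.le] at h2
    lift c i to ℝ≥0 using hcitop with q hq
    rw [EReal.coe_nnreal_eq_coe_real, ← EReal.coe_sub] at h1
    refine le_trans ?_ h1
    rw [EReal.coe_le_coe_iff]
    simp only [ENNReal.coe_toReal] at hle
    linarith


lemma EReal.sub_coe_sub_coe (z : EReal) (p q : ℝ≥0∞) :
    z - (p : EReal) - (q : EReal) = z - ((p + q : ℝ≥0∞) : EReal) := by
  rw [sub_eq_add_neg, sub_eq_add_neg, sub_eq_add_neg, add_assoc, EReal.coe_ennreal_add,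
    EReal.neg_add (.inl (EReal.coe_ennreal_ne_bot p)) (.inr (EReal.coe_ennreal_ne_bot q)),
    sub_eq_add_neg]

/-- For every `f ∈ L` one has the two-sided bound
`∫_Y f d(μκ₀) ≤ ρ(f) ≤ ∫_X f^C dμ̄`; in particular the left-hand side is `> −∞` and the
right-hand side is `< ∞`, so `ρ(f)` is finite. -/
theorem rho_two_sided_bound
    {X Y : Type*} [MeasurableSpace X] [StandardBorelSpace X]
    [MeasurableSpace Y] [StandardBorelSpace Y]
    (μ : Measure X) [IsProbabilityMeasure μ]
    (C : X → Measure Y → ℝ≥0∞)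
    (hC : Measurable fun p : X × Measure Y => C p.1 p.2)
    (κ₀ : Kernel X Y) [IsMarkovKernel κ₀]
    (hκ₀ : ∀ᵐ x ∂μ, C x (κ₀ x) = 0)
    (f : Y → EReal) (hf : memL μ (μ.bind κ₀) C f) :
    sint (μ.bind κ₀) f ≤ rho μ C f ∧ rho μ C f ≤ sint μ (Ctrans C f)
    ∧ ⊥ < sint (μ.bind κ₀) f ∧ sint μ (Ctrans C f) < ⊤
    ∧ ⊥ < rho μ C f ∧ rho μ C f < ⊤ := by
  obtain ⟨hfm, hbot, htop⟩ := hf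
  have hfp : Measurable fun y => (f y).posPart := EReal.measurable_posPart.comp hfm
  have hfn : Measurable fun y => (-(f y)).posPart := EReal.measurable_posPart.comp hfm.neg
  haveI h0P : IsProbabilityMeasure (μ.bind ⇑κ₀) := by
    constructor
    rw [Measure.bind_apply MeasurableSet.univ κ₀.measurable.aemeasurable]
    simp [measure_univ]
  have hint0 : ∫⁻ x, C x (κ₀ x) ∂μ = 0 := by
    have h := lintegral_congr_ae (g := fun _ => 0) hκ₀
    simpa using h
  have hwot : wotCost μ C (μ.bind ⇑κ₀) = 0 := by
    refine le_antisymm ?_ zero_le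
    simp only [wotCost]
    refine iInf_le_of_le κ₀ (iInf_le_of_le inferInstance (iInf_le_of_le rfl hint0.le))
  have hlow : sint (μ.bind ⇑κ₀) f ≤ rho μ C f := by
    have heq : sint (μ.bind ⇑κ₀) f - (wotCost μ C (μ.bind ⇑κ₀) : EReal)
        = sint (μ.bind ⇑κ₀) f := by
      rw [hwot, EReal.coe_ennreal_zero, sub_eq_add_neg, neg_zero, add_zero]
    rw [← heq, rho]
    exact le_iSup₂ (f := fun (ν : Measure Y) (_ : IsProbabilityMeasure ν) =>
      sint ν f - (wotCost μ C ν : EReal)) (μ.bind ⇑κ₀) h0P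
  have hup : rho μ C f ≤ sint μ (Ctrans C f) := by
    rw [rho]
    refine iSup₂_le fun ν hν => ?_
    rw [wotCost]
    refine ereal_sub_iInf_le _ _ _ _ _ ?_
    intro κ hκM hκν
    haveI := hκM
    subst hκν
    have hcm : Measurable fun x => C x (κ x) := hC.comp (measurable_id.prodMk κ.measurable)
    have h1 : sint (μ.bind ⇑κ) f
        = ((∫⁻ x, ∫⁻ y, (f y).posPart ∂κ x ∂μ : ℝ≥0∞) : EReal)
          - ((∫⁻ x, ∫⁻ y, (-(f y)).posPart ∂κ x ∂μ : ℝ≥0∞) : EReal) := by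
      rw [sint, Measure.lintegral_bind κ.measurable.aemeasurable hfp.aemeasurable,
        Measure.lintegral_bind κ.measurable.aemeasurable hfn.aemeasurable]
    rw [h1, EReal.sub_coe_sub_coe, ← lintegral_add_left (Measurable.lintegral_kernel hfn)]
    refine le_trans (lintegral_sub_le_sint μ _ _ (Measurable.lintegral_kernel hfp)
      ((Measurable.lintegral_kernel hfn).add hcm)) (sint_mono μ fun x => ?_)
    rw [← EReal.sub_coe_sub_coe, Ctrans]
    exact le_iSup₂ (f := fun (ϑ : Measure Y) (_ : IsProbabilityMeasure ϑ) =>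
      sint ϑ f - (C x ϑ : EReal)) (κ x) inferInstance
  exact ⟨hlow, hup, hbot, htop, lt_of_lt_of_le hbot hlow, lt_of_le_of_lt hup htop⟩

end
end
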